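/- Let 0 < q < p ≤ 1, n ≥ 1, and α, β ≥ 0. The first central moment of the (p,q)-Bernstein-Stancu operator is S_{n,p,q}((t - x); x) = (α - βx)/([n]_{p,q} + β) for all x ∈ [0,1]. -/

import Mathlib

open Finset Filter

noncomputable def pqInt (p q : ℝ) (n : ℕ) : ℝ := ∑ i ∈ Finset.range n, p ^ (n - 1 - i) * q ^ i

noncomputable def pqFact (p q : ℝ) (n : ℕ) : ℝ := ∏ j ∈ Finset.range n, pqInt p q (j + 1)

noncomputable def pqChoose (p q : ℝ) (n k : ℕ) : ℝ :=
  pqFact p q n / (pqFact p q k * pqFact p q (n - k))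

noncomputable def pqBasis (p q : ℝ) (n k : ℕ) (x : ℝ) : ℝ :=
  (1 / p ^ (n * (n - 1) / 2)) * pqChoose p q n k * p ^ (k * (k - 1) / 2) * x ^ k *
    ∏ s ∈ Finset.range (n - k), (p ^ s - q ^ s * x)

noncomputable def S (p q α β : ℝ) (n : ℕ) (f : ℝ → ℝ) (x : ℝ) : ℝ :=
  ∑ k ∈ Finset.range (n + 1),
    pqBasis p q n k x * f ((p ^ (n - k) * pqInt p q k + α) / (pqInt p q n + β))

/-! ### Auxiliary lemmas -/

lemma tri_succ (n : ℕ) : (n + 1) * n / 2 = n + n * (n - 1) / 2 := by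
  cases n with
  | zero => rfl
  | succ m =>
    have h : (m + 2) * (m + 1) = (m + 1) * m + (m + 1) * 2 := by ring
    rw [Nat.succ_sub_one, h, Nat.add_mul_div_right _ _ (by norm_num : 0 < 2)]
    omega

lemma pqInt_pos {p q : ℝ} (hp : 0 < p) (hq : 0 < q) {n : ℕ} (hn : 1 ≤ n) :
    0 < pqInt p q n := by
  unfold pqInt
  apply Finset.sum_pos
  · intro i _
    exact mul_pos (pow_pos hp _) (pow_pos hq _)
  · exact Finset.nonempty_range_iff.mpr (by omega)

lemma pqFact_pos {p q : ℝ} (hp : 0 < p) (hq : 0 < q) (n : ℕ) : 0 < pqFact p q n := by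
  unfold pqFact
  exact Finset.prod_pos fun j _ => pqInt_pos hp hq (by omega)

lemma pqFact_succ (p q : ℝ) (n : ℕ) :
    pqFact p q (n + 1) = pqFact p q n * pqInt p q (n + 1) :=
  Finset.prod_range_succ _ _

lemma pqFact_zero (p q : ℝ) : pqFact p q 0 = 1 := rfl

lemma pqInt_add (p q : ℝ) (a b : ℕ) :
    pqInt p q (a + b) = p ^ b * pqInt p q a + q ^ a * pqInt p q b := by
  unfold pqInt
  rw [Finset.sum_range_add, Finset.mul_sum, Finset.mul_sum]
  congr 1
  · apply Finset.sum_congr rfl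
    intro i hi
    rw [Finset.mem_range] at hi
    rw [← mul_assoc, ← pow_add]
    congr 2
    omega
  · apply Finset.sum_congr rfl
    intro i hi
    rw [Finset.mem_range] at hi
    have h1 : a + b - 1 - (a + i) = b - 1 - i := by omega
    rw [h1, pow_add]
    ring

lemma pqChoose_zero (p q : ℝ) {n : ℕ} (hp : 0 < p) (hq : 0 < q) :
    pqChoose p q n 0 = 1 := by
  unfold pqChoose
  rw [pqFact_zero, Nat.sub_zero, one_mul]
  exact div_self (ne_of_gt (pqFact_pos hp hq n))

lemma pqChoose_self (p q : ℝ) {n : ℕ} (hp : 0 < p) (hq : 0 < q) :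
    pqChoose p q n n = 1 := by
  unfold pqChoose
  rw [Nat.sub_self, pqFact_zero, mul_one]
  exact div_self (ne_of_gt (pqFact_pos hp hq n))

lemma pqChoose_pascal {p q : ℝ} (hp : 0 < p) (hq : 0 < q) {n k : ℕ} (hk : k < n) :
    pqChoose p q (n + 1) (k + 1) =
      p ^ (k + 1) * pqChoose p q n (k + 1) + q ^ (n - k) * pqChoose p q n k := by
  have h1 : n + 1 - (k + 1) = n - k := by omega
  have h2 : n - (k + 1) = n - k - 1 := by omega
  have h3 : n - k = (n - k - 1) + 1 := by omega
  have hint : pqInt p q (n + 1) =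
      p ^ (k + 1) * pqInt p q (n - k) + q ^ (n - k) * pqInt p q (k + 1) := by
    have h4 : n + 1 = (n - k) + (k + 1) := by omega
    rw [h4, pqInt_add]
  unfold pqChoose
  rw [h1, h2, pqFact_succ p q n, pqFact_succ p q k, h3, pqFact_succ p q (n - k - 1), hint, ← h3]
  have b1 := ne_of_gt (pqFact_pos hp hq n)
  have b2 := ne_of_gt (pqFact_pos hp hq k)
  have b3 := ne_of_gt (pqFact_pos hp hq (n - k - 1))
  have b4 := ne_of_gt (pqInt_pos hp hq (n := k + 1) (by omega))
  have b5 := ne_of_gt (pqInt_pos hp hq (n := n - k) (by omega))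
  field_simp

lemma pqChoose_absorb {p q : ℝ} (hp : 0 < p) (hq : 0 < q) {n k : ℕ} (hk : k ≤ n) :
    pqInt p q (k + 1) * pqChoose p q (n + 1) (k + 1) =
      pqInt p q (n + 1) * pqChoose p q n k := by
  have h1 : n + 1 - (k + 1) = n - k := by omega
  unfold pqChoose
  rw [h1, pqFact_succ p q n, pqFact_succ p q k]
  have b1 := ne_of_gt (pqFact_pos hp hq n)
  have b2 := ne_of_gt (pqFact_pos hp hq k)
  have b3 := ne_of_gt (pqFact_pos hp hq (n - k))
  have b4 := ne_of_gt (pqInt_pos hp hq (n := k + 1) (by omega))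
  field_simp

/-- unnormalized basis -/
noncomputable def bb (p q : ℝ) (n k : ℕ) (x : ℝ) : ℝ :=
  pqChoose p q n k * p ^ (k * (k - 1) / 2) * x ^ k *
    ∏ s ∈ Finset.range (n - k), (p ^ s - q ^ s * x)

noncomputable def Pa (p q x : ℝ) (n k : ℕ) : ℝ :=
  p ^ k * pqChoose p q n k * p ^ (k * (k - 1) / 2) * x ^ k *
    ∏ s ∈ Finset.range (n + 1 - k), (p ^ s - q ^ s * x)

noncomputable def Qa (p q x : ℝ) (n k : ℕ) : ℝ :=
  q ^ (n - k) * pqChoose p q n k * p ^ (k * (k - 1) / 2) * p ^ k * x ^ (k + 1) *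
    ∏ s ∈ Finset.range (n - k), (p ^ s - q ^ s * x)

lemma sum_bb {p q : ℝ} (hp : 0 < p) (hq : 0 < q) (n : ℕ) (x : ℝ) :
    ∑ k ∈ Finset.range (n + 1), bb p q n k x = p ^ (n * (n - 1) / 2) := by
  induction n with
  | zero => simp [bb, pqChoose_self p q hp hq]
  | succ n ih =>
    rw [Finset.sum_range_succ, Finset.sum_range_succ']
    have hmid : ∀ k ∈ Finset.range n,
        bb p q (n + 1) (k + 1) x = Pa p q x n (k + 1) + Qa p q x n k := by
      intro k hk
      rw [Finset.mem_range] at hk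
      unfold bb Pa Qa
      have h1 : n + 1 - (k + 1) = n - k := by omega
      have h2 : (k + 1) * (k + 1 - 1) / 2 = k * (k - 1) / 2 + k := by
        simp only [Nat.add_sub_cancel]; rw [tri_succ k]; exact Nat.add_comm _ _
      rw [h1, h2, pqChoose_pascal hp hq hk, pow_add]
      ring
    rw [Finset.sum_congr rfl hmid]
    have h0 : bb p q (n + 1) 0 x = Pa p q x n 0 := by
      unfold bb Pa
      rw [pqChoose_zero p q hp hq, pqChoose_zero p q hp hq]
      norm_num
    have hend : bb p q (n + 1) (n + 1) x = Qa p q x n n := by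
      unfold bb Qa
      rw [pqChoose_self p q hp hq, pqChoose_self p q hp hq]
      have h2 : (n + 1) * (n + 1 - 1) / 2 = n * (n - 1) / 2 + n := by
        simp only [Nat.add_sub_cancel]; rw [tri_succ n]; exact Nat.add_comm _ _
      rw [Nat.sub_self, Nat.sub_self, h2, pow_add]
      ring
    have hQ : ∑ k ∈ Finset.range n, Qa p q x n k + Qa p q x n n
        = ∑ k ∈ Finset.range (n + 1), Qa p q x n k := (Finset.sum_range_succ _ _).symm
    have hP : ∑ k ∈ Finset.range n, Pa p q x n (k + 1) + Pa p q x n 0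
        = ∑ k ∈ Finset.range (n + 1), Pa p q x n k := (Finset.sum_range_succ' _ _).symm
    have hcomb : ∀ k ∈ Finset.range (n + 1),
        Pa p q x n k + Qa p q x n k = p ^ n * bb p q n k x := by
      intro k hk
      rw [Finset.mem_range] at hk
      unfold Pa Qa bb
      have h1 : n + 1 - k = (n - k) + 1 := by omega
      rw [h1, Finset.prod_range_succ]
      have h2 : p ^ k * (p ^ (n - k)) = p ^ n := by
        rw [← pow_add]; congr 1; omega
      calc p ^ k * pqChoose p q n k * p ^ (k * (k - 1) / 2) * x ^ k *
            ((∏ s ∈ Finset.range (n - k), (p ^ s - q ^ s * x)) * (p ^ (n - k) - q ^ (n - k) * x)) +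
          q ^ (n - k) * pqChoose p q n k * p ^ (k * (k - 1) / 2) * p ^ k * x ^ (k + 1) *
            ∏ s ∈ Finset.range (n - k), (p ^ s - q ^ s * x)
          = (p ^ k * p ^ (n - k)) *
            (pqChoose p q n k * p ^ (k * (k - 1) / 2) * x ^ k *
              ∏ s ∈ Finset.range (n - k), (p ^ s - q ^ s * x)) := by ring
        _ = _ := by rw [h2]
    have hfin : (n + 1) * (n + 1 - 1) / 2 = n + n * (n - 1) / 2 := by
      simp only [Nat.add_sub_cancel]; exact tri_succ n
    calc (∑ k ∈ Finset.range n, (Pa p q x n (k + 1) + Qa p q x n k)) + bb p q (n + 1) 0 x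
          + bb p q (n + 1) (n + 1) x
        = (∑ k ∈ Finset.range n, Pa p q x n (k + 1) + Pa p q x n 0)
          + (∑ k ∈ Finset.range n, Qa p q x n k + Qa p q x n n) := by
          rw [Finset.sum_add_distrib, h0, hend]; ring
      _ = ∑ k ∈ Finset.range (n + 1), (Pa p q x n k + Qa p q x n k) := by
          rw [hP, hQ, Finset.sum_add_distrib]
      _ = ∑ k ∈ Finset.range (n + 1), p ^ n * bb p q n k x := Finset.sum_congr rfl hcomb
      _ = p ^ n * ∑ k ∈ Finset.range (n + 1), bb p q n k x := by rw [Finset.mul_sum]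
      _ = p ^ ((n + 1) * (n + 1 - 1) / 2) := by rw [ih, hfin, pow_add]

lemma sum_bb_mom {p q : ℝ} (hp : 0 < p) (hq : 0 < q) (n : ℕ) (x : ℝ) :
    ∑ k ∈ Finset.range (n + 1), bb p q n k x * (p ^ (n - k) * pqInt p q k)
      = pqInt p q n * x * p ^ (n * (n - 1) / 2) := by
  cases n with
  | zero => simp [bb, pqInt]
  | succ n =>
    rw [Finset.sum_range_succ']
    have h0 : pqInt p q 0 = 0 := by simp [pqInt]
    have hmid : ∀ k ∈ Finset.range (n + 1),
        bb p q (n + 1) (k + 1) x * (p ^ (n + 1 - (k + 1)) * pqInt p q (k + 1))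
          = pqInt p q (n + 1) * x * p ^ n * bb p q n k x := by
      intro k hk
      rw [Finset.mem_range] at hk
      unfold bb
      have h1 : n + 1 - (k + 1) = n - k := by omega
      have h2 : (k + 1) * (k + 1 - 1) / 2 = k * (k - 1) / 2 + k := by
        simp only [Nat.add_sub_cancel]; rw [tri_succ k]; exact Nat.add_comm _ _
      have habs := pqChoose_absorb hp hq (n := n) (k := k) (by omega)
      have h3 : p ^ k * (p ^ (n - k)) = p ^ n := by
        rw [← pow_add]; congr 1; omega
      calc pqChoose p q (n + 1) (k + 1) * p ^ ((k + 1) * (k + 1 - 1) / 2) * x ^ (k + 1) *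
            (∏ s ∈ Finset.range (n + 1 - (k + 1)), (p ^ s - q ^ s * x)) *
            (p ^ (n + 1 - (k + 1)) * pqInt p q (k + 1))
          = (pqInt p q (k + 1) * pqChoose p q (n + 1) (k + 1)) * (p ^ k * p ^ (n - k)) * x *
            (p ^ (k * (k - 1) / 2) * x ^ k *
              ∏ s ∈ Finset.range (n - k), (p ^ s - q ^ s * x)) := by
            rw [h1, h2, pow_add]; ring
        _ = _ := by rw [habs, h3]; ring
    rw [Finset.sum_congr rfl hmid, h0]
    have := sum_bb hp hq n x
    rw [← Finset.mul_sum, this]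
    have hfin : (n + 1) * (n + 1 - 1) / 2 = n + n * (n - 1) / 2 := by
      simp only [Nat.add_sub_cancel]; exact tri_succ n
    rw [hfin, pow_add]
    ring

theorem S_first_central_moment (p q α β : ℝ) (hq : 0 < q) (hqp : q < p) (hp : p ≤ 1)
    (hα : 0 ≤ α) (hβ : 0 ≤ β) (n : ℕ) (hn : 1 ≤ n)
    (x : ℝ) (hx : x ∈ Set.Icc (0 : ℝ) 1) :
    S p q α β n (fun t => t - x) x = (α - β * x) / (pqInt p q n + β) := by
  have hp0 : 0 < p := lt_trans hq hqp
  have hN : (0:ℝ) < p ^ (n * (n - 1) / 2) := pow_pos hp0 _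
  have hD : 0 < pqInt p q n + β := by
    have := pqInt_pos hp0 hq hn
    linarith
  have key : ∀ k ∈ Finset.range (n + 1),
      pqBasis p q n k x * ((p ^ (n - k) * pqInt p q k + α) / (pqInt p q n + β) - x)
        = (1 / (p ^ (n * (n - 1) / 2) * (pqInt p q n + β))) *
          (bb p q n k x * (p ^ (n - k) * pqInt p q k) + bb p q n k x * (α - x * (pqInt p q n + β))) := by
    intro k _
    unfold pqBasis bb
    field_simp
    ring
  unfold S
  rw [Finset.sum_congr rfl key, ← Finset.mul_sum, Finset.sum_add_distrib,
    ← Finset.sum_mul, sum_bb hp0 hq n x, sum_bb_mom hp0 hq n x]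
  have hNe : p ^ (n * (n - 1) / 2) ≠ 0 := ne_of_gt hN
  have hDe : pqInt p q n + β ≠ 0 := ne_of_gt hD
  field_simp
  ring
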